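/- Let n ≥ 1 and let v : (0,∞) × ℝⁿ → ℝ be smooth and satisfy ∂v/∂t = Δv − |∇v|² − n/(2t). Define P = 2Δv − |∇v|² − 2n/t. Then P satisfies the evolution equation ∂P/∂t = ΔP − 2⟨∇P, ∇v⟩ − 2|∇²v − (1/t)I|² − 2P/t − 2|∇v|²/t. -/

import Mathlib

open MeasureTheory Real

noncomputable section

/-- Partial derivative of `g` at `x` in the `i`-th coordinate direction. -/
def pd {n : ℕ} (i : Fin n) (g : (Fin n → ℝ) → ℝ) (x : Fin n → ℝ) : ℝ :=
  fderiv ℝ g x (Pi.single i 1)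

/-- Squared Euclidean norm of the (spatial) gradient of `g` at `x`. -/
def gradSq {n : ℕ} (g : (Fin n → ℝ) → ℝ) (x : Fin n → ℝ) : ℝ :=
  ∑ i, (pd i g x) ^ 2

/-- The (spatial) Laplacian of `g` at `x`. -/
def lap {n : ℕ} (g : (Fin n → ℝ) → ℝ) (x : Fin n → ℝ) : ℝ :=
  ∑ i, pd i (pd i g) x

/-- The `(i,j)` entry of the Hessian of `g` at `x`. -/
def hess {n : ℕ} (i j : Fin n) (g : (Fin n → ℝ) → ℝ) (x : Fin n → ℝ) : ℝ :=
  pd i (pd j g) x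

/-! ### Directional derivative toolkit -/

section Toolkit

variable {E : Type*} [NormedAddCommGroup E] [NormedSpace ℝ E]

/-- Directional derivative operator. -/
def Dv (w : E) (g : E → ℝ) (p : E) : ℝ := fderiv ℝ g p w

theorem contDiffOn_fderiv {s : Set E} (hs : IsOpen s) {g : E → ℝ}
    (hg : ContDiffOn ℝ (⊤ : ℕ∞) g s) :
    ContDiffOn ℝ (⊤ : ℕ∞) (fderiv ℝ g) s :=
  ((contDiffOn_infty_iff_fderiv_of_isOpen hs).1 hg).2

theorem contDiffOn_Dv {s : Set E} (hs : IsOpen s) {g : E → ℝ}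
    (hg : ContDiffOn ℝ (⊤ : ℕ∞) g s) (w : E) : ContDiffOn ℝ (⊤ : ℕ∞) (Dv w g) s :=
  (contDiffOn_fderiv hs hg).clm_apply contDiffOn_const

theorem dAt {s : Set E} (hs : IsOpen s) {g : E → ℝ}
    (hg : ContDiffOn ℝ (⊤ : ℕ∞) g s) {p : E} (hp : p ∈ s) : DifferentiableAt ℝ g p :=
  (hg.contDiffAt (hs.mem_nhds hp)).differentiableAt (by norm_num)

theorem dAt' {s : Set E} (hs : IsOpen s) {g : E → (E →L[ℝ] ℝ)}
    (hg : ContDiffOn ℝ (⊤ : ℕ∞) g s) {p : E} (hp : p ∈ s) : DifferentiableAt ℝ g p :=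
  (hg.contDiffAt (hs.mem_nhds hp)).differentiableAt (by norm_num)

theorem Dv_eq_snd_fderiv {s : Set E} (hs : IsOpen s) {g : E → ℝ}
    (hg : ContDiffOn ℝ (⊤ : ℕ∞) g s) {p : E} (hp : p ∈ s) (w w' : E) :
    Dv w' (Dv w g) p = fderiv ℝ (fderiv ℝ g) p w' w := by
  have hd : DifferentiableAt ℝ (fderiv ℝ g) p := dAt' hs (contDiffOn_fderiv hs hg) hp
  show fderiv ℝ (fun q => fderiv ℝ g q w) p w' = _
  rw [fderiv_clm_apply hd (differentiableAt_const w)]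
  simp

/-- Clairaut's theorem for `Dv`. -/
theorem Dv_comm {s : Set E} (hs : IsOpen s) {g : E → ℝ}
    (hg : ContDiffOn ℝ (⊤ : ℕ∞) g s) {p : E} (hp : p ∈ s) (w w' : E) :
    Dv w' (Dv w g) p = Dv w (Dv w' g) p := by
  rw [Dv_eq_snd_fderiv hs hg hp, Dv_eq_snd_fderiv hs hg hp]
  have : ContDiffAt ℝ 2 g p :=
    (hg.contDiffAt (hs.mem_nhds hp)).of_le (WithTop.coe_le_coe.2 (le_top : (2:ℕ∞) ≤ ⊤))
  exact this.isSymmSndFDerivAt (by simp) w' w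

theorem Dv_congr {s : Set E} (hs : IsOpen s) {f g : E → ℝ}
    (h : ∀ q ∈ s, f q = g q) {p : E} (hp : p ∈ s) (w : E) :
    Dv w f p = Dv w g p := by
  have : f =ᶠ[nhds p] g := by
    filter_upwards [hs.mem_nhds hp] with q hq using h q hq
  unfold Dv
  rw [this.fderiv_eq]

theorem Dv_sub {f g : E → ℝ} {p : E} (hf : DifferentiableAt ℝ f p)
    (hg : DifferentiableAt ℝ g p) (w : E) :
    Dv w (fun q => f q - g q) p = Dv w f p - Dv w g p := by
  unfold Dv; rw [fderiv_fun_sub hf hg]; rfl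

theorem Dv_const_mul {f : E → ℝ} {p : E} (hf : DifferentiableAt ℝ f p) (c : ℝ) (w : E) :
    Dv w (fun q => c * f q) p = c * Dv w f p := by
  unfold Dv; rw [fderiv_const_mul hf]; rfl

theorem Dv_mul {f g : E → ℝ} {p : E} (hf : DifferentiableAt ℝ f p)
    (hg : DifferentiableAt ℝ g p) (w : E) :
    Dv w (fun q => f q * g q) p = Dv w f p * g p + f p * Dv w g p := by
  unfold Dv; rw [fderiv_fun_mul hf hg]; simp; ring

theorem Dv_sq {f : E → ℝ} {p : E} (hf : DifferentiableAt ℝ f p) (w : E) :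
    Dv w (fun q => f q ^ 2) p = 2 * f p * Dv w f p := by
  have h1 := Dv_mul hf hf w
  have h2 : (fun q => f q ^ 2) = fun q => f q * f q := by funext q; ring
  rw [h2, h1]; ring

theorem Dv_sum {ι : Type*} [Fintype ι] {f : ι → E → ℝ} {p : E}
    (hf : ∀ i, DifferentiableAt ℝ (f i) p) (w : E) :
    Dv w (fun q => ∑ i, f i q) p = ∑ i, Dv w (f i) p := by
  unfold Dv
  rw [fderiv_fun_sum (fun i _ => hf i)]
  simp

end Toolkit

/-! ### product space facts -/

section ProdFacts

variable {F : Type*} [NormedAddCommGroup F] [NormedSpace ℝ F]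

theorem hasFDerivAt_div_fst {c : ℝ} {p : ℝ × F} (hp : p.1 ≠ 0) :
    HasFDerivAt (fun q : ℝ × F => c / q.1)
      ((-(c / p.1 ^ 2)) • ContinuousLinearMap.fst ℝ ℝ F) p := by
  have hd : HasDerivAt (fun s : ℝ => c / s) (-(c / p.1 ^ 2)) p.1 := by
    have h0 : (fun s : ℝ => c / s) = fun s => c * s⁻¹ := by funext s; rw [div_eq_mul_inv]
    rw [h0, show -(c / p.1 ^ 2) = c * -(p.1 ^ 2)⁻¹ by field_simp]
    exact (hasDerivAt_inv hp).const_mul c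
  have h := hd.hasFDerivAt.comp p (hasFDerivAt_fst (𝕜 := ℝ) (p := p))
  refine h.congr_fderiv ?_
  ext w
  all_goals simp [mul_comm]

theorem Dv_div_fst {c : ℝ} {p : ℝ × F} (hp : p.1 ≠ 0) (w : ℝ × F) :
    Dv w (fun q : ℝ × F => c / q.1) p = -(c / p.1 ^ 2) * w.1 := by
  unfold Dv
  rw [(hasFDerivAt_div_fst hp).fderiv]
  simp

theorem differentiableAt_div_fst {c : ℝ} {p : ℝ × F} (hp : p.1 ≠ 0) :
    DifferentiableAt ℝ (fun q : ℝ × F => c / q.1) p :=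
  (hasFDerivAt_div_fst hp).differentiableAt

end ProdFacts

/-! ### slice lemmas -/

theorem pd_slice {n : ℕ} {g : ℝ × (Fin n → ℝ) → ℝ} {t : ℝ} {x : Fin n → ℝ}
    (hd : DifferentiableAt ℝ g (t, x)) (i : Fin n) :
    pd i (fun y => g (t, y)) x = Dv ((0 : ℝ), Pi.single i 1) g (t, x) := by
  have h := hasFDerivAt_prodMk_right (𝕜 := ℝ) t x
  have hc : fderiv ℝ (fun y => g (t, y)) x
      = (fderiv ℝ g (t, x)).comp (ContinuousLinearMap.inr ℝ ℝ (Fin n → ℝ)) := by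
    rw [show (fun y => g (t, y)) = g ∘ (fun y => (t, y)) from rfl,
      fderiv_comp x hd h.differentiableAt, h.fderiv]
  unfold pd Dv
  rw [hc]
  simp

theorem deriv_slice {n : ℕ} {g : ℝ × (Fin n → ℝ) → ℝ} {t : ℝ} {x : Fin n → ℝ}
    (hd : DifferentiableAt ℝ g (t, x)) :
    deriv (fun s => g (s, x)) t = Dv ((1 : ℝ), (0 : Fin n → ℝ)) g (t, x) := by
  have h := hasFDerivAt_prodMk_left (𝕜 := ℝ) t x
  have hc : fderiv ℝ (fun s => g (s, x)) t
      = (fderiv ℝ g (t, x)).comp (ContinuousLinearMap.inl ℝ ℝ (Fin n → ℝ)) := by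
    rw [show (fun s => g (s, x)) = g ∘ (fun s => (s, x)) from rfl,
      fderiv_comp t hd h.differentiableAt, h.fderiv]
  rw [deriv, hc]
  show (fderiv ℝ g (t, x)) (ContinuousLinearMap.inl ℝ ℝ (Fin n → ℝ) 1) = _
  simp [Dv]

/-! ### the specific setting -/

def dom (n : ℕ) : Set (ℝ × (Fin n → ℝ)) := Set.Ioi 0 ×ˢ Set.univ

theorem isOpen_dom (n : ℕ) : IsOpen (dom n) := isOpen_Ioi.prod isOpen_univ

theorem mem_dom {n : ℕ} {t : ℝ} {x : Fin n → ℝ} (ht : 0 < t) : (t, x) ∈ dom n :=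
  Set.mem_prod.2 ⟨ht, Set.mem_univ x⟩

variable (n : ℕ) (v : ℝ → (Fin n → ℝ) → ℝ)

def jointV : ℝ × (Fin n → ℝ) → ℝ := fun p => v p.1 p.2

def eV (i : Fin n) : ℝ × (Fin n → ℝ) := ((0 : ℝ), Pi.single i 1)

def tauV : ℝ × (Fin n → ℝ) := ((1 : ℝ), 0)

def D1 (i : Fin n) : ℝ × (Fin n → ℝ) → ℝ := Dv (eV n i) (jointV n v)
def D2 (i j : Fin n) : ℝ × (Fin n → ℝ) → ℝ := Dv (eV n j) (D1 n v i)
def D3 (i j k : Fin n) : ℝ × (Fin n → ℝ) → ℝ := Dv (eV n k) (D2 n v i j)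
def D4 (i j k l : Fin n) : ℝ × (Fin n → ℝ) → ℝ := Dv (eV n l) (D3 n v i j k)

def Gf : ℝ × (Fin n → ℝ) → ℝ :=
  fun q => (∑ i, D2 n v i i q) - (∑ i, (D1 n v i q) ^ 2) - (n : ℝ) / 2 / q.1

def Wf : ℝ × (Fin n → ℝ) → ℝ :=
  fun q => 2 * (∑ i, D2 n v i i q) - (∑ i, (D1 n v i q) ^ 2) - 2 * (n : ℝ) / q.1

variable {n v} (hv : ContDiffOn ℝ (⊤ : ℕ∞) (jointV n v) (dom n))

section Smoothness
include hv

theorem smooth_D1 (i : Fin n) : ContDiffOn ℝ (⊤ : ℕ∞) (D1 n v i) (dom n) :=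
  contDiffOn_Dv (isOpen_dom n) hv _

theorem smooth_D2 (i j : Fin n) : ContDiffOn ℝ (⊤ : ℕ∞) (D2 n v i j) (dom n) :=
  contDiffOn_Dv (isOpen_dom n) (smooth_D1 hv i) _

theorem smooth_D3 (i j k : Fin n) : ContDiffOn ℝ (⊤ : ℕ∞) (D3 n v i j k) (dom n) :=
  contDiffOn_Dv (isOpen_dom n) (smooth_D2 hv i j) _

variable {p : ℝ × (Fin n → ℝ)} (hp : p ∈ dom n)
include hp

omit hv in
theorem hp1 : (0:ℝ) < p.1 := by
  rcases p with ⟨t, x⟩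
  exact (Set.mem_prod.1 hp).1

theorem dV : DifferentiableAt ℝ (jointV n v) p := dAt (isOpen_dom n) hv hp
theorem dD1 (i : Fin n) : DifferentiableAt ℝ (D1 n v i) p :=
  dAt (isOpen_dom n) (smooth_D1 hv i) hp
theorem dD2 (i j : Fin n) : DifferentiableAt ℝ (D2 n v i j) p :=
  dAt (isOpen_dom n) (smooth_D2 hv i j) hp
theorem dD3 (i j k : Fin n) : DifferentiableAt ℝ (D3 n v i j k) p :=
  dAt (isOpen_dom n) (smooth_D3 hv i j k) hp

theorem dSum2 : DifferentiableAt ℝ (fun q => ∑ i, D2 n v i i q) p := by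
  apply DifferentiableAt.fun_sum
  intro i _
  exact dD2 hv hp i i

theorem dSumSq : DifferentiableAt ℝ (fun q => ∑ i, (D1 n v i q) ^ 2) p := by
  apply DifferentiableAt.fun_sum
  intro i _
  exact (dD1 hv hp i).pow 2

theorem dGf : DifferentiableAt ℝ (Gf n v) p := by
  exact ((dSum2 hv hp).sub (dSumSq hv hp)).sub (differentiableAt_div_fst (ne_of_gt (hp1 hp)))

theorem dWf : DifferentiableAt ℝ (Wf n v) p := by
  exact (((dSum2 hv hp).const_mul 2).sub (dSumSq hv hp)).sub
    (differentiableAt_div_fst (ne_of_gt (hp1 hp)))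

end Smoothness

/-! ### slice identities -/

section Slices
include hv

variable {t : ℝ} {x : Fin n → ℝ} (ht : 0 < t)
include ht

theorem pd_v1 (i : Fin n) : pd i (v t) x = D1 n v i (t, x) :=
  pd_slice (dV hv (mem_dom ht)) i

theorem pd_v1_fun (i : Fin n) : v t = fun y => jointV n v (t, y) := rfl

theorem pd_v2 (i j : Fin n) : pd j (pd i (v t)) x = D2 n v i j (t, x) := by
  rw [show pd i (v t) = fun y => D1 n v i (t, y) from funext fun y => pd_v1 hv ht i]
  exact pd_slice (dD1 hv (mem_dom ht) i) j

theorem lap_v : lap (v t) x = ∑ i, D2 n v i i (t, x) := by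
  unfold lap
  exact Finset.sum_congr rfl fun i _ => pd_v2 hv ht i i

theorem grad_v : gradSq (v t) x = ∑ i, (D1 n v i (t, x)) ^ 2 := by
  unfold gradSq
  exact Finset.sum_congr rfl fun i _ => by rw [pd_v1 hv ht i]

theorem hess_v (i j : Fin n) : hess i j (v t) x = D2 n v j i (t, x) := pd_v2 hv ht j i

end Slices

/-! ### symmetry lemmas -/

section Symmetry
include hv
variable {p : ℝ × (Fin n → ℝ)} (hp : p ∈ dom n)
include hp

theorem sym2 (a b : Fin n) : D2 n v a b p = D2 n v b a p :=
  Dv_comm (isOpen_dom n) hv hp (eV n a) (eV n b)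

theorem sym3 (a b : Fin n) : D3 n v a a b p = D3 n v b a a p := by
  have h1 : D3 n v a a b p = Dv (eV n a) (Dv (eV n b) (D1 n v a)) p :=
    Dv_comm (isOpen_dom n) (smooth_D1 hv a) hp (eV n a) (eV n b)
  have h2 : Dv (eV n a) (Dv (eV n b) (D1 n v a)) p = Dv (eV n a) (D2 n v b a) p :=
    Dv_congr (isOpen_dom n) (fun q hq => sym2 hv hq a b) hp (eV n a)
  rw [h1, h2]
  rfl

end Symmetry

/-! ### evolution computations -/

section Evolution
include hv

variable (heqv : ∀ t > (0:ℝ), ∀ x : Fin n → ℝ,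
  deriv (fun s => v s x) t = lap (v t) x - gradSq (v t) x - n / (2 * t))
include heqv

theorem hT : ∀ p ∈ dom n, Dv (tauV n) (jointV n v) p = Gf n v p := by
  rintro ⟨t, x⟩ hp
  have ht : 0 < t := hp1 hp
  have h1 : Dv (tauV n) (jointV n v) (t, x) = deriv (fun s => v s x) t :=
    (deriv_slice (dV hv hp)).symm
  rw [h1, heqv t ht x, lap_v hv ht, grad_v hv ht]
  show _ = _ - _ - (n : ℝ) / 2 / (t, x).1
  congr 1
  rw [div_div]

theorem dG_eq (i : Fin n) : ∀ p ∈ dom n, Dv (eV n i) (Gf n v) p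
    = (∑ j, D3 n v j j i p) - ∑ j, 2 * D1 n v j p * D2 n v j i p := by
  intro p hp
  have ht0 : p.1 ≠ 0 := ne_of_gt (hp1 hp)
  unfold Gf
  rw [Dv_sub ((dSum2 hv hp).fun_sub (dSumSq hv hp)) (differentiableAt_div_fst ht0),
    Dv_sub (dSum2 hv hp) (dSumSq hv hp),
    Dv_sum (fun j => dD2 hv hp j j),
    Dv_sum (fun j => (dD1 hv hp j).fun_pow 2),
    Dv_div_fst ht0]
  have hsq : ∀ j : Fin n, Dv (eV n i) (fun q => (D1 n v j q) ^ 2) p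
      = 2 * D1 n v j p * D2 n v j i p := fun j => Dv_sq (dD1 hv hp j) _
  rw [Finset.sum_congr rfl (fun j _ => hsq j),
    show (eV n i).1 = 0 from rfl, mul_zero, sub_zero]
  rfl

theorem tc1 (i : Fin n) : ∀ p ∈ dom n,
    Dv (tauV n) (D1 n v i) p = Dv (eV n i) (Gf n v) p := by
  intro p hp
  have h1 : Dv (tauV n) (D1 n v i) p = Dv (eV n i) (Dv (tauV n) (jointV n v)) p :=
    Dv_comm (isOpen_dom n) hv hp (eV n i) (tauV n)
  rw [h1]
  exact Dv_congr (isOpen_dom n) (hT hv heqv) hp _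

theorem ddG_eq (i : Fin n) : ∀ p ∈ dom n, Dv (eV n i) (Dv (eV n i) (Gf n v)) p
    = (∑ j, D4 n v j j i i p)
      - ∑ j, 2 * (D2 n v j i p * D2 n v j i p + D1 n v j p * D3 n v j i i p) := by
  intro p hp
  have h0 : Dv (eV n i) (Dv (eV n i) (Gf n v)) p
      = Dv (eV n i)
          (fun q => (∑ j, D3 n v j j i q) - ∑ j, 2 * D1 n v j q * D2 n v j i q) p :=
    Dv_congr (isOpen_dom n) (fun q hq => dG_eq hv heqv i q hq) hp _
  have hA : DifferentiableAt ℝ (fun q => ∑ j, D3 n v j j i q) p :=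
    DifferentiableAt.fun_sum fun j _ => dD3 hv hp j j i
  have hB : DifferentiableAt ℝ (fun q => ∑ j, 2 * D1 n v j q * D2 n v j i q) p :=
    DifferentiableAt.fun_sum fun j _ => ((dD1 hv hp j).const_mul 2).fun_mul (dD2 hv hp j i)
  have hmul : ∀ j : Fin n, Dv (eV n i) (fun q => 2 * D1 n v j q * D2 n v j i q) p
      = 2 * (D2 n v j i p * D2 n v j i p + D1 n v j p * D3 n v j i i p) := by
    intro j
    rw [Dv_mul ((dD1 hv hp j).const_mul 2) (dD2 hv hp j i),
      Dv_const_mul (dD1 hv hp j)]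
    show 2 * Dv (eV n i) (D1 n v j) p * D2 n v j i p
        + 2 * D1 n v j p * Dv (eV n i) (D2 n v j i) p = _
    rw [show Dv (eV n i) (D1 n v j) p = D2 n v j i p from rfl,
      show Dv (eV n i) (D2 n v j i) p = D3 n v j i i p from rfl]
    ring
  rw [h0, Dv_sub hA hB, Dv_sum (fun j => dD3 hv hp j j i),
    Dv_sum (fun j => ((dD1 hv hp j).const_mul 2).fun_mul (dD2 hv hp j i)),
    Finset.sum_congr rfl (fun j _ => hmul j)]
  rfl

theorem tc2 (i : Fin n) : ∀ p ∈ dom n,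
    Dv (tauV n) (D2 n v i i) p = Dv (eV n i) (Dv (eV n i) (Gf n v)) p := by
  intro p hp
  have h1 : Dv (tauV n) (D2 n v i i) p = Dv (eV n i) (Dv (tauV n) (D1 n v i)) p :=
    Dv_comm (isOpen_dom n) (smooth_D1 hv i) hp (eV n i) (tauV n)
  rw [h1]
  exact Dv_congr (isOpen_dom n) (fun q hq => tc1 hv heqv i q hq) hp _

theorem dtW_eq : ∀ p ∈ dom n, Dv (tauV n) (Wf n v) p =
    2 * (∑ i, ((∑ j, D4 n v j j i i p)
        - ∑ j, 2 * (D2 n v j i p * D2 n v j i p + D1 n v j p * D3 n v j i i p)))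
      - ∑ i, 2 * D1 n v i p * ((∑ j, D3 n v j j i p)
        - ∑ j, 2 * D1 n v j p * D2 n v j i p)
      + 2 * n / p.1 ^ 2 := by
  intro p hp
  have ht0 : p.1 ≠ 0 := ne_of_gt (hp1 hp)
  unfold Wf
  rw [Dv_sub (((dSum2 hv hp).const_mul 2).fun_sub (dSumSq hv hp)) (differentiableAt_div_fst ht0),
    Dv_sub ((dSum2 hv hp).const_mul 2) (dSumSq hv hp),
    Dv_const_mul (dSum2 hv hp),
    Dv_sum (fun i => dD2 hv hp i i),
    Dv_sum (fun i => (dD1 hv hp i).fun_pow 2),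
    Dv_div_fst ht0]
  have h1 : ∀ i : Fin n, Dv (tauV n) (D2 n v i i) p
      = (∑ j, D4 n v j j i i p)
        - ∑ j, 2 * (D2 n v j i p * D2 n v j i p + D1 n v j p * D3 n v j i i p) := by
    intro i
    rw [tc2 hv heqv i p hp, ddG_eq hv heqv i p hp]
  have h2 : ∀ i : Fin n, Dv (tauV n) (fun q => (D1 n v i q) ^ 2) p
      = 2 * D1 n v i p * ((∑ j, D3 n v j j i p)
        - ∑ j, 2 * D1 n v j p * D2 n v j i p) := by
    intro i
    rw [Dv_sq (dD1 hv hp i), tc1 hv heqv i p hp, dG_eq hv heqv i p hp]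
  rw [Finset.sum_congr rfl (fun i _ => h1 i), Finset.sum_congr rfl (fun i _ => h2 i),
    show (tauV n).1 = 1 from rfl]
  ring

end Evolution

/-! ### spatial derivatives of W -/

section SpaceW
include hv

theorem dW_eq (i : Fin n) : ∀ p ∈ dom n, Dv (eV n i) (Wf n v) p
    = 2 * (∑ j, D3 n v j j i p) - ∑ j, 2 * D1 n v j p * D2 n v j i p := by
  intro p hp
  have ht0 : p.1 ≠ 0 := ne_of_gt (hp1 hp)
  unfold Wf
  rw [Dv_sub (((dSum2 hv hp).const_mul 2).fun_sub (dSumSq hv hp)) (differentiableAt_div_fst ht0),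
    Dv_sub ((dSum2 hv hp).const_mul 2) (dSumSq hv hp),
    Dv_const_mul (dSum2 hv hp),
    Dv_sum (fun j => dD2 hv hp j j),
    Dv_sum (fun j => (dD1 hv hp j).fun_pow 2),
    Dv_div_fst ht0]
  have hsq : ∀ j : Fin n, Dv (eV n i) (fun q => (D1 n v j q) ^ 2) p
      = 2 * D1 n v j p * D2 n v j i p := fun j => Dv_sq (dD1 hv hp j) _
  rw [Finset.sum_congr rfl (fun j _ => hsq j),
    show (eV n i).1 = 0 from rfl, mul_zero, sub_zero]
  rfl

theorem ddW_eq (i : Fin n) : ∀ p ∈ dom n, Dv (eV n i) (Dv (eV n i) (Wf n v)) p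
    = 2 * (∑ j, D4 n v j j i i p)
      - ∑ j, 2 * (D2 n v j i p * D2 n v j i p + D1 n v j p * D3 n v j i i p) := by
  intro p hp
  have h0 : Dv (eV n i) (Dv (eV n i) (Wf n v)) p
      = Dv (eV n i)
          (fun q => 2 * (∑ j, D3 n v j j i q) - ∑ j, 2 * D1 n v j q * D2 n v j i q) p :=
    Dv_congr (isOpen_dom n) (fun q hq => dW_eq hv i q hq) hp _
  have hA : DifferentiableAt ℝ (fun q => ∑ j, D3 n v j j i q) p :=
    DifferentiableAt.fun_sum fun j _ => dD3 hv hp j j i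
  have hB : DifferentiableAt ℝ (fun q => ∑ j, 2 * D1 n v j q * D2 n v j i q) p :=
    DifferentiableAt.fun_sum fun j _ => ((dD1 hv hp j).const_mul 2).fun_mul (dD2 hv hp j i)
  have hmul : ∀ j : Fin n, Dv (eV n i) (fun q => 2 * D1 n v j q * D2 n v j i q) p
      = 2 * (D2 n v j i p * D2 n v j i p + D1 n v j p * D3 n v j i i p) := by
    intro j
    rw [Dv_mul ((dD1 hv hp j).const_mul 2) (dD2 hv hp j i),
      Dv_const_mul (dD1 hv hp j)]
    show 2 * Dv (eV n i) (D1 n v j) p * D2 n v j i p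
        + 2 * D1 n v j p * Dv (eV n i) (D2 n v j i) p = _
    rw [show Dv (eV n i) (D1 n v j) p = D2 n v j i p from rfl,
      show Dv (eV n i) (D2 n v j i) p = D3 n v j i i p from rfl]
    ring
  rw [h0, Dv_sub (hA.const_mul 2) hB, Dv_const_mul hA,
    Dv_sum (fun j => dD3 hv hp j j i),
    Dv_sum (fun j => ((dD1 hv hp j).const_mul 2).fun_mul (dD2 hv hp j i)),
    Finset.sum_congr rfl (fun j _ => hmul j)]
  rfl

end SpaceW

section SmoothW
include hv

theorem smooth_Wf : ContDiffOn ℝ (⊤ : ℕ∞) (Wf n v) (dom n) := by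
  have hC : ContDiffOn ℝ (⊤ : ℕ∞) (fun q : ℝ × (Fin n → ℝ) => 2 * (n : ℝ) / q.1) (dom n) := by
    apply ContDiffOn.div contDiffOn_const contDiff_fst.contDiffOn
    intro q hq
    exact ne_of_gt (hp1 hq)
  exact ((contDiffOn_const.mul (ContDiffOn.sum fun i _ => smooth_D2 hv i i)).sub
    (ContDiffOn.sum fun i _ => (smooth_D1 hv i).pow 2)).sub hC

end SmoothW

theorem final_algebra (n : ℕ) {t : ℝ} (ht : t ≠ 0)
    (F : Fin n → ℝ) (M S R Q : Fin n → Fin n → ℝ)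
    (hSR : ∀ a b, S a b = R b a) :
    2 * (∑ i, (∑ j, Q i j - ∑ j, 2 * (M i j * M i j + F j * R i j)))
      - ∑ i, 2 * F i * (∑ j, S i j - ∑ j, 2 * F j * M i j) + 2 * n / t ^ 2
    = (∑ i, (2 * ∑ j, Q i j - ∑ j, 2 * (M i j * M i j + F j * R i j)))
      - 2 * (∑ i, (2 * ∑ j, S i j - ∑ j, 2 * F j * M i j) * F i)
      - 2 * (∑ i, ∑ j, (M i j - (1/t) * (if i = j then (1:ℝ) else 0)) ^ 2)
      - 2 * (2 * (∑ i, M i i) - (∑ i, F i ^ 2) - 2 * n / t) / t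
      - 2 * (∑ i, F i ^ 2) / t := by
  have hS : ∑ i, F i * ∑ j, S i j = ∑ i, ∑ j, F j * R i j := by
    have h1 : ∑ i, F i * ∑ j, S i j = ∑ i, ∑ j, F i * R j i := by
      simp only [Finset.mul_sum, hSR]
    rw [h1, Finset.sum_comm]
  have hδ : ∑ i, ∑ j, (M i j - (1/t) * (if i = j then (1:ℝ) else 0)) ^ 2
      = (∑ i, ∑ j, M i j * M i j) - (2/t) * (∑ i, M i i) + n / t^2 := by
    have h1 : ∀ i : Fin n, ∑ j, (M i j - (1/t) * (if i = j then (1:ℝ) else 0)) ^ 2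
        = (∑ j, M i j * M i j) - (2/t) * M i i + 1 / t^2 := by
      intro i
      have h2 : ∀ j : Fin n, (M i j - (1/t) * (if i = j then (1:ℝ) else 0)) ^ 2
          = M i j * M i j - (2/t) * (if i = j then M i j else 0)
            + (1/t^2) * (if i = j then 1 else 0) := by
        intro j
        by_cases h : i = j <;> (simp [h]; ring)
      simp only [h2]
      rw [Finset.sum_add_distrib, Finset.sum_sub_distrib, ← Finset.mul_sum, ← Finset.mul_sum]
      simp [Finset.sum_ite_eq]
    simp only [h1]
    rw [Finset.sum_add_distrib, Finset.sum_sub_distrib, ← Finset.mul_sum]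
    simp [Finset.sum_const, Finset.card_univ]
    ring
  have h2 : ∑ i, 2 * F i * (∑ j, S i j - ∑ j, 2 * F j * M i j)
      = 2 * (∑ i, F i * ∑ j, S i j) - 4 * ∑ i, (F i * ∑ j, F j * M i j) := by
    have h : ∀ i : Fin n, 2 * F i * (∑ j, S i j - ∑ j, 2 * F j * M i j)
        = 2 * (F i * ∑ j, S i j) - 4 * (F i * ∑ j, F j * M i j) := by
      intro i
      have h' : ∑ j, 2 * F j * M i j = 2 * ∑ j, F j * M i j := by
        rw [Finset.mul_sum]; apply Finset.sum_congr rfl; intro j _; ring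
      rw [h']; ring
    simp only [h]
    rw [Finset.sum_sub_distrib, ← Finset.mul_sum, ← Finset.mul_sum]
  have h3 : ∑ i, (2 * ∑ j, S i j - ∑ j, 2 * F j * M i j) * F i
      = 2 * (∑ i, F i * ∑ j, S i j) - 2 * ∑ i, (F i * ∑ j, F j * M i j) := by
    have h : ∀ i : Fin n, (2 * ∑ j, S i j - ∑ j, 2 * F j * M i j) * F i
        = 2 * (F i * ∑ j, S i j) - 2 * (F i * ∑ j, F j * M i j) := by
      intro i
      have h' : ∑ j, 2 * F j * M i j = 2 * ∑ j, F j * M i j := by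
        rw [Finset.mul_sum]; apply Finset.sum_congr rfl; intro j _; ring
      rw [h']; ring
    simp only [h]
    rw [Finset.sum_sub_distrib, ← Finset.mul_sum, ← Finset.mul_sum]
  have h4 : ∀ c : ℝ, ∑ i, (c * ∑ j, Q i j - ∑ j, 2 * (M i j * M i j + F j * R i j))
      = c * (∑ i, ∑ j, Q i j)
        - 2 * ((∑ i, ∑ j, M i j * M i j) + ∑ i, ∑ j, F j * R i j) := by
    intro c
    have h : ∀ i : Fin n, c * ∑ j, Q i j - ∑ j, 2 * (M i j * M i j + F j * R i j)
        = c * ∑ j, Q i j - 2 * ((∑ j, M i j * M i j) + ∑ j, F j * R i j) := by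
      intro i
      congr 1
      rw [← Finset.sum_add_distrib, Finset.mul_sum]
    simp only [h]
    rw [Finset.sum_sub_distrib, ← Finset.mul_sum, ← Finset.mul_sum, ← Finset.sum_add_distrib]
  have h5 : ∑ i, (∑ j, Q i j - ∑ j, 2 * (M i j * M i j + F j * R i j))
      = (∑ i, ∑ j, Q i j)
        - 2 * ((∑ i, ∑ j, M i j * M i j) + ∑ i, ∑ j, F j * R i j) := by
    have := h4 1
    simpa using this
  rw [h2, h3, h4, h5, hδ, hS]
  field_simp
  ring

/-- Corollary 3.2: evolution equation for `P = 2Δv − |∇v|² − 2n/t` when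
`∂v/∂t = Δv − |∇v|² − n/(2t)` on flat space. -/
theorem evolution_P
    (n : ℕ) (hn : 1 ≤ n) (v : ℝ → (Fin n → ℝ) → ℝ)
    (hsmooth : ContDiffOn ℝ (⊤ : ℕ∞) (fun p : ℝ × (Fin n → ℝ) => v p.1 p.2)
      (Set.Ioi 0 ×ˢ Set.univ))
    (heq : ∀ t > (0:ℝ), ∀ x : Fin n → ℝ,
      deriv (fun s => v s x) t = lap (v t) x - gradSq (v t) x - n / (2 * t))
    (P : ℝ → (Fin n → ℝ) → ℝ)
    (hP : ∀ t x, P t x = 2 * lap (v t) x - gradSq (v t) x - 2 * n / t) :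
    ∀ t > (0:ℝ), ∀ x : Fin n → ℝ,
      deriv (fun s => P s x) t =
        lap (P t) x - 2 * (∑ i, pd i (P t) x * pd i (v t) x)
        - 2 * (∑ i, ∑ j, (hess i j (v t) x - (1 / t) * (if i = j then (1:ℝ) else 0)) ^ 2)
        - 2 * P t x / t - 2 * gradSq (v t) x / t := by
  intro t ht x
  have hv : ContDiffOn ℝ (⊤ : ℕ∞) (jointV n v) (dom n) := hsmooth
  have hp : (t, x) ∈ dom n := mem_dom ht
  have ht0 : t ≠ 0 := ne_of_gt ht
  have hPW : ∀ s, 0 < s → ∀ y : Fin n → ℝ, P s y = Wf n v (s, y) := by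
    intro s hs y
    rw [hP, lap_v hv hs, grad_v hv hs]
    rfl
  have hderiv : deriv (fun s => P s x) t = Dv (tauV n) (Wf n v) (t, x) := by
    have hev : (fun s => P s x) =ᶠ[nhds t] fun s => Wf n v (s, x) := by
      filter_upwards [isOpen_Ioi.mem_nhds ht] with s hs using hPW s hs x
    rw [hev.deriv_eq]
    exact deriv_slice (dWf hv hp)
  have hpdP : ∀ (y : Fin n → ℝ) (i : Fin n),
      pd i (P t) y = Dv (eV n i) (Wf n v) (t, y) := by
    intro y i
    rw [show P t = fun y => Wf n v (t, y) from funext fun y => hPW t ht y]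
    exact pd_slice (dWf hv (mem_dom ht)) i
  have hlapP : lap (P t) x
      = ∑ i, (2 * (∑ j, D4 n v j j i i (t, x))
        - ∑ j, 2 * (D2 n v j i (t, x) * D2 n v j i (t, x)
          + D1 n v j (t, x) * D3 n v j i i (t, x))) := by
    unfold lap
    apply Finset.sum_congr rfl
    intro i _
    rw [show pd i (P t) = fun y => Dv (eV n i) (Wf n v) (t, y) from
        funext fun y => hpdP y i]
    rw [pd_slice (dAt (isOpen_dom n)
      (contDiffOn_Dv (isOpen_dom n) (smooth_Wf hv) (eV n i)) hp) i]
    exact ddW_eq hv i (t, x) hp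
  have hsum1 : (∑ i, pd i (P t) x * pd i (v t) x)
      = ∑ i, (2 * (∑ j, D3 n v j j i (t, x))
          - ∑ j, 2 * D1 n v j (t, x) * D2 n v j i (t, x)) * D1 n v i (t, x) := by
    apply Finset.sum_congr rfl
    intro i _
    rw [hpdP x i, dW_eq hv i (t, x) hp, pd_v1 hv ht i]
  have hhess : (∑ i, ∑ j, (hess i j (v t) x - (1 / t) * (if i = j then (1:ℝ) else 0)) ^ 2)
      = ∑ i, ∑ j, (D2 n v j i (t, x) - (1 / t) * (if i = j then (1:ℝ) else 0)) ^ 2 := by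
    apply Finset.sum_congr rfl; intro i _
    apply Finset.sum_congr rfl; intro j _
    rw [hess_v hv ht i j]
  have hPval : P t x = 2 * (∑ i, D2 n v i i (t, x))
      - (∑ i, (D1 n v i (t, x)) ^ 2) - 2 * n / t := by
    rw [hP, lap_v hv ht, grad_v hv ht]
  have hgrad : gradSq (v t) x = ∑ i, (D1 n v i (t, x)) ^ 2 := grad_v hv ht
  rw [hderiv, dtW_eq hv heq (t, x) hp, hlapP, hsum1, hhess, hPval, hgrad]
  exact final_algebra n ht0 (fun i => D1 n v i (t, x)) (fun i j => D2 n v j i (t, x))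
    (fun i j => D3 n v j j i (t, x)) (fun i j => D3 n v j i i (t, x))
    (fun i j => D4 n v j j i i (t, x)) (fun a b => sym3 hv hp b a)
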